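/- Fix n ∈ ℕ, a tetra-closed set G of triples of Fin n, and a threshold t ∈ ℕ with n > 4 + 4t. Suppose that (i) the t-bad edges are pairwise vertex-disjoint (no two distinct t-bad edges share a vertex), and (ii) every edge of Fin n is contained in at least one triple of G. Then G contains all triples of Fin n. -/
import Mathlib


/-- A set `G` of triples of `Fin n` is tetra-closed if for every 4-element
subset `s` of `Fin n`, whenever three of the four 3-element subsets of `s`
belong to `G`, so does the fourth. -/
def TetraClosed {n : ℕ} (G : Finset (Finset (Fin n))) : Prop :=
  ∀ s : Finset (Fin n), s.card = 4 →
    ∀ f ∈ s.powersetCard 3, (∀ g ∈ s.powersetCard 3, g ≠ f → g ∈ G) → f ∈ G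

/-- The bad triples (triples of `Fin n` not in `G`) containing the edge `e`. -/
def badTriplesOn {n : ℕ} (G : Finset (Finset (Fin n))) (e : Finset (Fin n)) :
    Finset (Finset (Fin n)) :=
  ((Finset.univ : Finset (Fin n)).powersetCard 3).filter (fun f => e ⊆ f ∧ f ∉ G)

/-- The `t`-bad edges: the 2-element subsets of `Fin n` contained in more than
`t` bad triples. -/
def tBadEdges {n : ℕ} (G : Finset (Finset (Fin n))) (t : ℕ) :
    Finset (Finset (Fin n)) :=
  ((Finset.univ : Finset (Fin n)).powersetCard 2).filter
    (fun e => t < (badTriplesOn G e).card)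

open Finset

lemma triple_perm {α : Type*} [DecidableEq α] (a b c : α) :
    ({c, a, b} : Finset α) = {a, b, c} := by
  rw [Finset.insert_comm, Finset.pair_comm]

lemma triple_swap {α : Type*} [DecidableEq α] (a b c : α) :
    ({a, b, c} : Finset α) = {a, c, b} := by
  rw [Finset.pair_comm]

lemma tetra_apply {n : ℕ} {G : Finset (Finset (Fin n))} (hG : TetraClosed G)
    {a b c d : Fin n} (hab : a ≠ b) (hac : a ≠ c) (had : a ≠ d)
    (hbc : b ≠ c) (hbd : b ≠ d) (hcd : c ≠ d)
    (h1 : ({a, b, d} : Finset (Fin n)) ∈ G)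
    (h2 : ({a, c, d} : Finset (Fin n)) ∈ G)
    (h3 : ({b, c, d} : Finset (Fin n)) ∈ G) :
    ({a, b, c} : Finset (Fin n)) ∈ G := by
  set s : Finset (Fin n) := {a, b, c, d} with hs
  have hcard : s.card = 4 := by
    rw [hs, card_insert_of_notMem (by simp [hab, hac, had]),
        card_insert_of_notMem (by simp [hbc, hbd]), card_pair hcd]
  refine hG s hcard {a, b, c} ?_ ?_
  · rw [mem_powersetCard]
    refine ⟨by intro x hx; simp at hx; simp [hs]; tauto, ?_⟩
    rw [card_insert_of_notMem (by simp [hab, hac]), card_pair hbc]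
  · intro g hg hgne
    rw [mem_powersetCard] at hg
    obtain ⟨hgs, hg3⟩ := hg
    have h1' : (s \ g).card = 1 := by rw [card_sdiff_of_subset hgs, hcard, hg3]
    obtain ⟨y, hy⟩ := Finset.card_eq_one.mp h1'
    have hgeq : g = s.erase y := by
      rw [Finset.erase_eq, ← hy, Finset.sdiff_sdiff_self_left,
        Finset.inter_eq_right.mpr hgs]
    have hys : y ∈ s := by
      have : y ∈ s \ g := by rw [hy]; exact mem_singleton_self y
      exact (mem_sdiff.mp this).1
    rw [hs] at hys
    simp only [mem_insert, mem_singleton] at hys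
    rcases hys with rfl | rfl | rfl | rfl
    · have : s.erase y = {b, c, d} := by
        ext z
        simp only [hs, mem_erase, mem_insert, mem_singleton]
        constructor
        · rintro ⟨hz, rfl | h⟩
          · exact absurd rfl hz
          · exact h
        · rintro (rfl | rfl | rfl)
          · exact ⟨Ne.symm hab, Or.inr (Or.inl rfl)⟩
          · exact ⟨Ne.symm hac, Or.inr (Or.inr (Or.inl rfl))⟩
          · exact ⟨Ne.symm had, Or.inr (Or.inr (Or.inr rfl))⟩
      rw [hgeq, this]; exact h3
    · have : s.erase y = {a, c, d} := by
        ext z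
        simp only [hs, mem_erase, mem_insert, mem_singleton]
        constructor
        · rintro ⟨hz, rfl | rfl | h⟩
          · exact Or.inl rfl
          · exact absurd rfl hz
          · exact Or.inr h
        · rintro (rfl | rfl | rfl)
          · exact ⟨hab, Or.inl rfl⟩
          · exact ⟨Ne.symm hbc, Or.inr (Or.inr (Or.inl rfl))⟩
          · exact ⟨Ne.symm hbd, Or.inr (Or.inr (Or.inr rfl))⟩
      rw [hgeq, this]; exact h2
    · have : s.erase y = {a, b, d} := by
        ext z
        simp only [hs, mem_erase, mem_insert, mem_singleton]
        constructor
        · rintro ⟨hz, rfl | rfl | rfl | h⟩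
          · exact Or.inl rfl
          · exact Or.inr (Or.inl rfl)
          · exact absurd rfl hz
          · exact Or.inr (Or.inr h)
        · rintro (rfl | rfl | rfl)
          · exact ⟨hac, Or.inl rfl⟩
          · exact ⟨hbc, Or.inr (Or.inl rfl)⟩
          · exact ⟨Ne.symm hcd, Or.inr (Or.inr (Or.inr rfl))⟩
      rw [hgeq, this]; exact h1
    · exfalso; apply hgne
      rw [hgeq]
      ext z
      simp only [hs, mem_erase, mem_insert, mem_singleton]
      constructor
      · rintro ⟨hz, rfl | rfl | rfl | rfl⟩
        · exact Or.inl rfl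
        · exact Or.inr (Or.inl rfl)
        · exact Or.inr (Or.inr rfl)
        · exact absurd rfl hz
      · rintro (rfl | rfl | rfl)
        · exact ⟨had, Or.inl rfl⟩
        · exact ⟨hbd, Or.inr (Or.inl rfl)⟩
        · exact ⟨hcd, Or.inr (Or.inr (Or.inl rfl))⟩

def badExt {n : ℕ} (G : Finset (Finset (Fin n))) (e : Finset (Fin n)) :
    Finset (Fin n) :=
  Finset.univ.filter fun w => w ∉ e ∧ insert w e ∉ G

lemma insert_mem_of_not_badExt {n : ℕ} {G : Finset (Finset (Fin n))}
    {e : Finset (Fin n)} {x : Fin n} (h : x ∉ badExt G e) (hxe : x ∉ e) :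
    insert x e ∈ G := by
  by_contra hc
  apply h
  simp only [badExt, mem_filter, mem_univ, true_and]
  exact ⟨hxe, hc⟩

lemma badExt_card_le {n t : ℕ} {G : Finset (Finset (Fin n))} {e : Finset (Fin n)}
    (he2 : e.card = 2) (he : e ∉ tBadEdges G t) : (badExt G e).card ≤ t := by
  have hmaps : ∀ w ∈ badExt G e, insert w e ∈ badTriplesOn G e := by
    intro w hw
    simp only [badExt, mem_filter, mem_univ, true_and] at hw
    refine Finset.mem_filter.mpr ⟨Finset.mem_powersetCard.mpr ⟨subset_univ _, ?_⟩,
      subset_insert _ _, hw.2⟩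
    rw [card_insert_of_notMem hw.1, he2]
  have hinj : Set.InjOn (fun w => insert w e) (badExt G e) := by
    intro w hw w' hw' h
    simp only [badExt, coe_filter, Set.mem_setOf_eq] at hw hw'
    have hww : insert w e = insert w' e := h
    have : w ∈ insert w' e := hww ▸ mem_insert_self w e
    rcases mem_insert.mp this with h' | h'
    · exact h'
    · exact absurd h' hw.2.1
  have hle := Finset.card_le_card_of_injOn _ hmaps hinj
  simp only [tBadEdges, mem_filter, mem_powersetCard, not_and, not_lt] at he
  have := he ⟨subset_univ e, he2⟩
  omega

lemma key_lemma {n t : ℕ} {G : Finset (Finset (Fin n))}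
    (hGtriples : ∀ f ∈ G, f.card = 3) (hG : TetraClosed G)
    (hn : n > 4 + 4 * t)
    (hdisj : ∀ e₁ ∈ tBadEdges G t, ∀ e₂ ∈ tBadEdges G t, e₁ ≠ e₂ → Disjoint e₁ e₂)
    (hcover : ∀ e : Finset (Fin n), e.card = 2 → ∃ f ∈ G, e ⊆ f)
    {u v w : Fin n} (huv : u ≠ v) (huw : u ≠ w) (hvw : v ≠ w)
    (hbadf : ({u, v, w} : Finset (Fin n)) ∉ G)
    (hbe : ({u, v} : Finset (Fin n)) ∈ tBadEdges G t) : False := by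
  -- any edge sharing a vertex with {u,v} but different from it is t-good
  have notbad : ∀ z₁ z₂ : Fin n, z₁ ∈ ({u, v} : Finset (Fin n)) →
      z₂ ∉ ({u, v} : Finset (Fin n)) →
      ({z₁, z₂} : Finset (Fin n)) ∉ tBadEdges G t := by
    intro z₁ z₂ h1 h2 hmem
    have hne : ({u, v} : Finset (Fin n)) ≠ {z₁, z₂} := by
      intro h
      exact h2 (h ▸ (mem_insert.mpr (Or.inr (mem_singleton_self z₂))))
    have hd := hdisj _ hbe _ hmem hne
    exact (Finset.disjoint_left.mp hd h1) (mem_insert_self z₁ _)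
  have hwuv : w ∉ ({u, v} : Finset (Fin n)) := by
    simp only [mem_insert, mem_singleton]
    push_neg
    exact ⟨Ne.symm huw, Ne.symm hvw⟩
  have hbuw : ({u, w} : Finset (Fin n)) ∉ tBadEdges G t :=
    notbad u w (mem_insert_self u _) hwuv
  have hbvw : ({v, w} : Finset (Fin n)) ∉ tBadEdges G t :=
    notbad v w (mem_insert.mpr (Or.inr (mem_singleton_self v))) hwuv
  -- a good triple containing {u,v}
  obtain ⟨g, hgG, hge⟩ := hcover {u, v} (card_pair huv)
  have hg3 := hGtriples g hgG
  have hone : (g \ {u, v}).card = 1 := by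
    rw [card_sdiff_of_subset hge, hg3, card_pair huv]
  obtain ⟨d, hd⟩ := card_eq_one.mp hone
  have hdmem : d ∈ g \ ({u, v} : Finset (Fin n)) := by
    rw [hd]; exact mem_singleton_self d
  have hduv : d ∉ ({u, v} : Finset (Fin n)) := (mem_sdiff.mp hdmem).2
  have hdu : d ≠ u := fun h => hduv (by rw [h]; exact mem_insert_self u _)
  have hdv : d ≠ v := fun h => hduv (by rw [h]; exact mem_insert.mpr (Or.inr (mem_singleton_self v)))
  have hgeq : g = {d, u, v} := by
    have h := Finset.union_sdiff_of_subset hge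
    rw [hd] at h
    rw [← h, Finset.union_comm, ← Finset.insert_eq]
  have hdw : d ≠ w := by
    intro h
    subst h
    apply hbadf
    rw [← triple_perm u v d, ← hgeq]
    exact hgG
  have hbud : ({u, d} : Finset (Fin n)) ∉ tBadEdges G t :=
    notbad u d (mem_insert_self u _) hduv
  have hbvd : ({v, d} : Finset (Fin n)) ∉ tBadEdges G t :=
    notbad v d (mem_insert.mpr (Or.inr (mem_singleton_self v))) hduv
  -- cardinality bounds
  have c1 := badExt_card_le (card_pair huw) hbuw
  have c2 := badExt_card_le (card_pair hvw) hbvw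
  have c3 := badExt_card_le (card_pair (Ne.symm hdu)) hbud
  have c4 := badExt_card_le (card_pair (Ne.symm hdv)) hbvd
  -- find a fresh vertex x
  have h4 : ({u, v, w, d} : Finset (Fin n)).card ≤ 4 := by
    refine le_trans (card_insert_le _ _) ?_
    have h2 := card_insert_le v ({w, d} : Finset (Fin n))
    have h3 := card_insert_le w ({d} : Finset (Fin n))
    simp only [card_singleton] at h3
    omega
  have hFcard : (({u, v, w, d} : Finset (Fin n)) ∪ badExt G {u, w} ∪ badExt G {v, w}
      ∪ badExt G {u, d} ∪ badExt G {v, d}).card < (univ : Finset (Fin n)).card := by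
    rw [card_univ, Fintype.card_fin]
    have k1 := card_union_le (({u, v, w, d} : Finset (Fin n)) ∪ badExt G {u, w}
      ∪ badExt G {v, w} ∪ badExt G {u, d}) (badExt G {v, d})
    have k2 := card_union_le (({u, v, w, d} : Finset (Fin n)) ∪ badExt G {u, w}
      ∪ badExt G {v, w}) (badExt G {u, d})
    have k3 := card_union_le (({u, v, w, d} : Finset (Fin n)) ∪ badExt G {u, w})
      (badExt G {v, w})
    have k4 := card_union_le ({u, v, w, d} : Finset (Fin n)) (badExt G {u, w})
    omega
  have hns : ¬ ((univ : Finset (Fin n)) ⊆ ({u, v, w, d} : Finset (Fin n)) ∪ badExt G {u, w}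
      ∪ badExt G {v, w} ∪ badExt G {u, d} ∪ badExt G {v, d}) :=
    fun h => absurd (card_le_card h) (not_le.mpr hFcard)
  obtain ⟨x, -, hx⟩ := Finset.not_subset.mp hns
  simp only [mem_union, not_or] at hx
  obtain ⟨⟨⟨⟨hx0, hx1⟩, hx2⟩, hx3⟩, hx4⟩ := hx
  simp only [mem_insert, mem_singleton] at hx0
  push_neg at hx0
  obtain ⟨hxu, hxv, hxw, hxd⟩ := hx0
  have hxuw : x ∉ ({u, w} : Finset (Fin n)) := by
    simp only [mem_insert, mem_singleton]; push_neg; exact ⟨hxu, hxw⟩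
  have hxvw : x ∉ ({v, w} : Finset (Fin n)) := by
    simp only [mem_insert, mem_singleton]; push_neg; exact ⟨hxv, hxw⟩
  have hxud : x ∉ ({u, d} : Finset (Fin n)) := by
    simp only [mem_insert, mem_singleton]; push_neg; exact ⟨hxu, hxd⟩
  have hxvd : x ∉ ({v, d} : Finset (Fin n)) := by
    simp only [mem_insert, mem_singleton]; push_neg; exact ⟨hxv, hxd⟩
  have g1 : ({u, w, x} : Finset (Fin n)) ∈ G := by
    rw [← triple_perm u w x]
    exact insert_mem_of_not_badExt hx1 hxuw
  have g2 : ({v, w, x} : Finset (Fin n)) ∈ G := by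
    rw [← triple_perm v w x]
    exact insert_mem_of_not_badExt hx2 hxvw
  have g3 : ({u, x, d} : Finset (Fin n)) ∈ G := by
    rw [triple_swap u x d, ← triple_perm u d x]
    exact insert_mem_of_not_badExt hx3 hxud
  have g4 : ({v, x, d} : Finset (Fin n)) ∈ G := by
    rw [triple_swap v x d, ← triple_perm v d x]
    exact insert_mem_of_not_badExt hx4 hxvd
  have guvd : ({u, v, d} : Finset (Fin n)) ∈ G := by
    rw [← triple_perm u v d, ← hgeq]
    exact hgG
  have T1 : ({u, v, x} : Finset (Fin n)) ∈ G :=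
    tetra_apply hG huv (Ne.symm hxu) (Ne.symm hdu) (Ne.symm hxv) (Ne.symm hdv)
      hxd guvd g3 g4
  exact hbadf (tetra_apply hG huv huw (Ne.symm hxu) hvw (Ne.symm hxv)
      (Ne.symm hxw) T1 g1 g2)

/-- Every elementary partition in which every edge is covered by a good triple
is complete: if `n > 4 + 4t`, `G` is tetra-closed, the `t`-bad edges are
pairwise vertex-disjoint, and every edge of `Fin n` is contained in at least
one triple of `G`, then `G` contains all triples of `Fin n`. -/
theorem elementary_covered_complete (n t : ℕ) (G : Finset (Finset (Fin n)))
    (hGtriples : ∀ f ∈ G, f.card = 3) (hG : TetraClosed G)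
    (hn : n > 4 + 4 * t)
    (hdisj : ∀ e₁ ∈ tBadEdges G t, ∀ e₂ ∈ tBadEdges G t, e₁ ≠ e₂ → Disjoint e₁ e₂)
    (hcover : ∀ e : Finset (Fin n), e.card = 2 → ∃ f ∈ G, e ⊆ f) :
    ∀ f : Finset (Fin n), f.card = 3 → f ∈ G := by
  intro f hf3
  by_contra hfG
  obtain ⟨a, b, c, hab, hac, hbc, rfl⟩ := Finset.card_eq_three.mp hf3
  by_cases h1 : ({a, b} : Finset (Fin n)) ∈ tBadEdges G t
  · exact key_lemma hGtriples hG hn hdisj hcover hab hac hbc hfG h1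
  by_cases h2 : ({a, c} : Finset (Fin n)) ∈ tBadEdges G t
  · refine key_lemma hGtriples hG hn hdisj hcover hac hab (Ne.symm hbc) ?_ h2
    rw [← triple_swap a b c]
    exact hfG
  by_cases h3 : ({b, c} : Finset (Fin n)) ∈ tBadEdges G t
  · refine key_lemma hGtriples hG hn hdisj hcover hbc (Ne.symm hab) (Ne.symm hac) ?_ h3
    rw [← triple_perm b c a]
    exact hfG
  -- all three edges of f are t-good: find a fresh vertex d
  apply hfG
  have c1 := badExt_card_le (card_pair hab) h1
  have c2 := badExt_card_le (card_pair hac) h2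
  have c3 := badExt_card_le (card_pair hbc) h3
  have h3' : ({a, b, c} : Finset (Fin n)).card ≤ 3 := by
    refine le_trans (card_insert_le _ _) ?_
    have hh := card_insert_le b ({c} : Finset (Fin n))
    simp only [card_singleton] at hh
    omega
  have hFcard : (({a, b, c} : Finset (Fin n)) ∪ badExt G {a, b} ∪ badExt G {a, c}
      ∪ badExt G {b, c}).card < (univ : Finset (Fin n)).card := by
    rw [card_univ, Fintype.card_fin]
    have k1 := card_union_le (({a, b, c} : Finset (Fin n)) ∪ badExt G {a, b}
      ∪ badExt G {a, c}) (badExt G {b, c})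
    have k2 := card_union_le (({a, b, c} : Finset (Fin n)) ∪ badExt G {a, b})
      (badExt G {a, c})
    have k3 := card_union_le ({a, b, c} : Finset (Fin n)) (badExt G {a, b})
    omega
  have hns : ¬ ((univ : Finset (Fin n)) ⊆ ({a, b, c} : Finset (Fin n)) ∪ badExt G {a, b}
      ∪ badExt G {a, c} ∪ badExt G {b, c}) :=
    fun h => absurd (card_le_card h) (not_le.mpr hFcard)
  obtain ⟨d, -, hd⟩ := Finset.not_subset.mp hns
  simp only [mem_union, not_or] at hd
  obtain ⟨⟨⟨hd0, hd1⟩, hd2⟩, hd3⟩ := hd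
  simp only [mem_insert, mem_singleton] at hd0
  push_neg at hd0
  obtain ⟨hda, hdb, hdc⟩ := hd0
  have hdab : d ∉ ({a, b} : Finset (Fin n)) := by
    simp only [mem_insert, mem_singleton]; push_neg; exact ⟨hda, hdb⟩
  have hdac : d ∉ ({a, c} : Finset (Fin n)) := by
    simp only [mem_insert, mem_singleton]; push_neg; exact ⟨hda, hdc⟩
  have hdbc : d ∉ ({b, c} : Finset (Fin n)) := by
    simp only [mem_insert, mem_singleton]; push_neg; exact ⟨hdb, hdc⟩
  have g1 : ({a, b, d} : Finset (Fin n)) ∈ G := by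
    rw [← triple_perm a b d]
    exact insert_mem_of_not_badExt hd1 hdab
  have g2 : ({a, c, d} : Finset (Fin n)) ∈ G := by
    rw [← triple_perm a c d]
    exact insert_mem_of_not_badExt hd2 hdac
  have g3 : ({b, c, d} : Finset (Fin n)) ∈ G := by
    rw [← triple_perm b c d]
    exact insert_mem_of_not_badExt hd3 hdbc
  exact tetra_apply hG hab hac (Ne.symm hda) hbc (Ne.symm hdb) (Ne.symm hdc) g1 g2 g3
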